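/- Let T be a finite set of observations, for each t ∈ T let m^t > 0, p̄^t ∈ ℝ^K_{++}, and let μ^t be a Borel probability measure on the expenditure simplex 𝓔^t = {e ∈ ℝ^K_+ : ∑_k e_k = m^t}. Fix a nonempty R ⊆ K with μ^t({e ∈ 𝓔^t : e_k > 0 for all k ∈ R}) = 1 for each t. Suppose the data set {(μ^t, p̄^t)}_{t∈T} is RPM-rationalizable: there exist a Borel probability measure η on ℝ_{++} and a strictly increasing, strictly concave, continuous utility function u: ℝ^K_+ → ℝ such that, writing p^{λ,t} = (λ p̄^t_R, p̄^t_{−R}) and letting e^{λ,t} denote the unique maximizer of e ↦ u(x(e, p^{λ,t})) over 𝓔^t, the map λ ↦ e^{λ,t} is measurable and μ^t is the pushforward of η under it, for every t. Then {(μ^t, p̄^t)}_{t∈T} is RUM-rationalizable: there exist a probability space (Ω, 𝓕, P) and a family (u_ω)_{ω∈Ω} of strictly increasing, strictly concave, continuous utility functions on ℝ^K_+ such that, letting e^{ω,t} denote the unique maximizer of e ↦ u_ω(x(e, p̄^t)) over 𝓔^t, the map ω ↦ e^{ω,t} is measurable and μ^t is the pushforward of P under it, for every t. -/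
import Mathlib


open Filter Set MeasureTheory

noncomputable section

/-- The inner product `p·x = ∑ k, p k * x k`. -/
def dotp {K : ℕ} (p x : Fin K → ℝ) : ℝ := ∑ k, p k * x k

/-- The implied bundle `x(e,p) = (e_k / p_k)_k`. -/
def demandOf {K : ℕ} (e p : Fin K → ℝ) : Fin K → ℝ := fun k => e k / p k

/-- The budget set `B(p,m) = {x ∈ ℝ^K_+ : p·x ≤ m}`. -/
def budget {K : ℕ} (p : Fin K → ℝ) (m : ℝ) : Set (Fin K → ℝ) :=
  {x | (∀ k, 0 ≤ x k) ∧ dotp p x ≤ m}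

/-- A utility function on `ℝ^K_+`: continuous and strictly increasing. -/
def IsUtility {K : ℕ} (u : (Fin K → ℝ) → ℝ) : Prop :=
  ContinuousOn u {x | ∀ k, 0 ≤ x k} ∧
  ∀ x y : Fin K → ℝ, (∀ k, 0 ≤ x k) → (∀ k, 0 ≤ y k) →
    (∀ k, x k ≤ y k) → (∃ k, x k < y k) → u x < u y

/-- Basic data-set conditions: expenditures are nonnegative with positive total,
and price indices are strictly positive. -/
def IsDataset {N T K : ℕ} (e : Fin N → Fin T → Fin K → ℝ)
    (pbar : Fin T → Fin K → ℝ) : Prop :=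
  (∀ i t k, 0 ≤ e i t k) ∧ (∀ i t, 0 < ∑ k, e i t k) ∧ (∀ t k, 0 < pbar t k)

/-- The expenditure simplex `{e ∈ ℝ^K_+ : ∑ k, e k = m}`. -/
def simplexE {K : ℕ} (m : ℝ) : Set (Fin K → ℝ) := {e | (∀ k, 0 ≤ e k) ∧ ∑ k, e k = m}

/-- A strictly increasing, strictly concave and continuous utility function on `ℝ^K_+`. -/
def IsNiceUtility {K : ℕ} (u : (Fin K → ℝ) → ℝ) : Prop :=
  IsUtility u ∧ StrictConcaveOn ℝ {x : Fin K → ℝ | ∀ k, 0 ≤ x k} u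

/-- The price vector `p^{λ,t}` obtained from `p̄^t` by scaling the coordinates in `R`
by `λ`. -/
def plamR {T K : ℕ} (R : Finset (Fin K)) (pbar : Fin T → Fin K → ℝ) (lam : ℝ)
    (t : Fin T) : Fin K → ℝ :=
  fun k => if k ∈ R then lam * pbar t k else pbar t k


/-- Rescaling the coordinates in `R` by `1/lam` preserves niceness of a utility. -/
lemma isNiceUtility_rescale {K : ℕ} (u : (Fin K → ℝ) → ℝ) (hu : IsNiceUtility u)
    (R : Finset (Fin K)) (lam : ℝ) (hlam : 0 < lam) :
    IsNiceUtility (fun x => u (fun k => if k ∈ R then x k / lam else x k)) := by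
  set L : (Fin K → ℝ) → (Fin K → ℝ) := fun x k => if k ∈ R then x k / lam else x k with hL
  have hmaps : ∀ x : Fin K → ℝ, (∀ k, 0 ≤ x k) → ∀ k, 0 ≤ L x k := by
    intro x hx k
    simp only [hL]
    split
    · exact div_nonneg (hx k) hlam.le
    · exact hx k
  have hLcont : Continuous L := by
    refine continuous_pi fun k => ?_
    simp only [hL]
    by_cases hk : k ∈ R
    · simp only [hk, if_true]
      exact Continuous.div_const (continuous_apply k : Continuous fun x : Fin K → ℝ => x k) lam
    · simp only [hk, if_false]
      exact (continuous_apply k : Continuous fun x : Fin K → ℝ => x k)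
  have hLmono : ∀ x y : Fin K → ℝ, (∀ k, x k ≤ y k) → ∀ k, L x k ≤ L y k := by
    intro x y h k
    simp only [hL]
    split
    · exact (div_le_div_iff_of_pos_right hlam).mpr (h k)
    · exact h k
  have hLsmono : ∀ x y : Fin K → ℝ, ∀ k, x k < y k → L x k < L y k := by
    intro x y k h
    simp only [hL]
    split
    · exact div_lt_div_of_pos_right h hlam
    · exact h
  have hLinj : Function.Injective L := by
    intro x y h
    funext k
    have := congrFun h k
    simp only [hL] at this
    split at this
    · field_simp at this; exact this
    · exact this
  have hLlin : ∀ (a b : ℝ) (x y : Fin K → ℝ), L (a • x + b • y) = a • L x + b • L y := by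
    intro a b x y
    funext k
    simp only [hL, Pi.add_apply, Pi.smul_apply, smul_eq_mul]
    split <;> ring
  refine ⟨⟨?_, ?_⟩, ?_⟩
  · exact hu.1.1.comp hLcont.continuousOn (fun x hx => hmaps x hx)
  · intro x y hx hy hxy ⟨k, hk⟩
    exact hu.1.2 (L x) (L y) (hmaps x hx) (hmaps y hy) (hLmono x y hxy)
      ⟨k, hLsmono x y k hk⟩
  · refine ⟨hu.2.1, ?_⟩
    intro x hx y hy hne a b ha hb hab
    have h1 : L (a • x + b • y) = a • L x + b • L y := hLlin a b x y
    have := hu.2.2 (hmaps x hx) (hmaps y hy) (fun h => hne (hLinj h)) ha hb hab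
    calc a • u (L x) + b • u (L y) < u (a • L x + b • L y) := this
      _ = u (L (a • x + b • y)) := by rw [h1]

/-- Proposition 8, first part: if a (possibly non-discrete)
cross-sectional data set is RPM-rationalizable, then it is RUM-rationalizable. -/
theorem rpm_implies_rum {T K : ℕ}
    (m : Fin T → ℝ) (hm : ∀ t, 0 < m t)
    (pbar : Fin T → Fin K → ℝ) (hpbar : ∀ t k, 0 < pbar t k)
    (μ : Fin T → Measure (Fin K → ℝ)) (hprob : ∀ t, IsProbabilityMeasure (μ t))
    (R : Finset (Fin K)) (hR : R.Nonempty)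
    (hsupp : ∀ t, μ t {e | e ∈ simplexE (m t) ∧ ∀ k ∈ R, 0 < e k} = 1)
    (hRPM : ∃ (η : Measure ℝ) (_ : IsProbabilityMeasure η)
        (u : (Fin K → ℝ) → ℝ) (E : ℝ → Fin T → (Fin K → ℝ)),
        η (Set.Ioi (0 : ℝ)) = 1 ∧ IsNiceUtility u ∧
        (∀ lam : ℝ, 0 < lam → ∀ t, E lam t ∈ simplexE (m t) ∧
          ∀ e ∈ simplexE (m t),
            u (demandOf e (plamR R pbar lam t)) ≤
              u (demandOf (E lam t) (plamR R pbar lam t))) ∧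
        (∀ t, Measurable fun lam => E lam t) ∧
        (∀ t, μ t = η.map fun lam => E lam t)) :
    ∃ (Ω : Type) (_ : MeasurableSpace Ω) (P : Measure Ω)
      (_ : IsProbabilityMeasure P)
      (u : Ω → (Fin K → ℝ) → ℝ) (E : Ω → Fin T → (Fin K → ℝ)),
      (∀ ω, IsNiceUtility (u ω)) ∧
      (∀ ω t, E ω t ∈ simplexE (m t) ∧
        ∀ e ∈ simplexE (m t),
          u ω (demandOf e (pbar t)) ≤ u ω (demandOf (E ω t) (pbar t))) ∧
      (∀ t, Measurable fun ω => E ω t) ∧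
      (∀ t, μ t = P.map fun ω => E ω t) := by
  classical
  obtain ⟨η, hη, u, E, hη1, hu, hmax, hmeas, hmap⟩ := hRPM
  -- utilities indexed by ω ∈ ℝ, with a fallback at λ = 1 for ω ≤ 0
  set lamOf : ℝ → ℝ := fun ω => if 0 < ω then ω else 1 with hlamOf
  have hlampos : ∀ ω, 0 < lamOf ω := by
    intro ω; simp only [hlamOf]; split <;> norm_num; assumption
  refine ⟨ℝ, inferInstance, η, hη,
    fun ω x => u (fun k => if k ∈ R then x k / lamOf ω else x k),
    fun ω t => E (lamOf ω) t, ?_, ?_, ?_, ?_⟩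
  · intro ω
    exact isNiceUtility_rescale u hu R (lamOf ω) (hlampos ω)
  · intro ω t
    obtain ⟨hEmem, hEmax⟩ := hmax (lamOf ω) (hlampos ω) t
    refine ⟨hEmem, ?_⟩
    intro e he
    have key : ∀ f : Fin K → ℝ,
        (fun k => if k ∈ R then demandOf f (pbar t) k / lamOf ω
          else demandOf f (pbar t) k) = demandOf f (plamR R pbar (lamOf ω) t) := by
      intro f
      funext k
      simp only [demandOf, plamR]
      split
      · rw [mul_comm, ← div_div]
      · rfl
    beta_reduce
    rw [key e, key (E (lamOf ω) t)]
    exact hEmax e he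
  · intro t
    have : Measurable lamOf := by
      apply Measurable.ite measurableSet_Ioi measurable_id measurable_const
    exact (hmeas t).comp this
  · intro t
    rw [hmap t]
    apply MeasureTheory.Measure.map_congr
    have hc : η (Set.Ioi (0:ℝ))ᶜ = 0 := by
      have := measure_compl (s := Set.Ioi (0:ℝ)) measurableSet_Ioi (measure_ne_top η _)
      rw [hη1] at this
      simpa [measure_univ] using this
    filter_upwards [measure_eq_zero_iff_ae_notMem.mp hc] with ω hω
    have hωpos : 0 < ω := by simpa using hω
    simp only [hlamOf, if_pos hωpos]
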